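/- Let $E \subset \mathbb{R}^d$ be an $n$-regular set that has big pieces of Lipschitz graphs with constants $\theta, L > 0$. Then there exists $\delta > 0$ depending only on $d$, $L$, $\theta$ such that: for every $x \in E$ and $0 < r < \operatorname{diam}(E)$, letting $V_0 \in G(d,n)$ be the base plane of a Lipschitz graph $\Gamma$ witnessing the big-pieces condition in $B(x,r)$, one has $\mathcal{H}^n(\pi_V(B(x,r) \cap E)) \ge \delta r^n$ for all $V \in G(d,n)$ with $\|\pi_V - \pi_{V_0}\| < \delta$. In particular, $E$ has plenty of big projections. -/

import Mathlib

open MeasureTheory Metric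
open scoped ENNReal NNReal

noncomputable def projL {d : ℕ} (V : Submodule ℝ (EuclideanSpace ℝ (Fin d))) :
    EuclideanSpace ℝ (Fin d) →L[ℝ] EuclideanSpace ℝ (Fin d) :=
  V.subtypeL.comp (V.orthogonalProjection)

/-- `Γ` is an `n`-dimensional `L`-Lipschitz graph over the plane `V`:
`Γ = {v + f(v) : v ∈ V}` for some `L`-Lipschitz `f : V → V^⊥`. -/
def IsLipGraph (d n : ℕ) (L : ℝ≥0) (V : Submodule ℝ (EuclideanSpace ℝ (Fin d)))
    (Γ : Set (EuclideanSpace ℝ (Fin d))) : Prop :=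
  Module.finrank ℝ V = n ∧
  ∃ f : V → EuclideanSpace ℝ (Fin d),
    (∀ v, f v ∈ Vᗮ) ∧ LipschitzWith L f ∧
    Γ = Set.range fun v : V => (v : EuclideanSpace ℝ (Fin d)) + f v

/-- If an `n`-regular set `E ⊆ ℝ^d` has big pieces of Lipschitz graphs with
constants `θ, L`, then there is `δ > 0`, depending only on `d, L, θ` (and `n`, `C₀`), such
that whenever a Lipschitz graph `Γ` over `V₀` witnesses the big-pieces condition in `B(x,r)`,
every plane `W` with `‖π_W - π_{V₀}‖ < δ` satisfies `H^n(π_W(B(x,r) ∩ E)) ≥ δ r^n`; in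
particular `E` has plenty of big projections. -/
theorem bplg_implies_pbp (d n : ℕ) (hn : 0 < n) (hnd : n < d)
    (L : ℝ≥0) (θ : ℝ) (hθ : 0 < θ) (C₀ : ℝ) (hC₀ : 1 ≤ C₀)
    (E : Set (EuclideanSpace ℝ (Fin d))) (hEclosed : IsClosed E)
    (hreg : ∀ x ∈ E, ∀ r : ℝ, 0 < r → ENNReal.ofReal r < EMetric.diam E →
      ENNReal.ofReal (C₀⁻¹ * r ^ n) ≤ ((μH[(n:ℝ)]).restrict E) (closedBall x r) ∧
      ((μH[(n:ℝ)]).restrict E) (closedBall x r) ≤ ENNReal.ofReal (C₀ * r ^ n))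
    (hBPLG : ∀ x ∈ E, ∀ r : ℝ, 0 < r → ENNReal.ofReal r < EMetric.diam E →
      ∃ V₀ Γ, IsLipGraph d n L V₀ Γ ∧
        ENNReal.ofReal (θ * r ^ n) ≤ μH[(n:ℝ)] (ball x r ∩ E ∩ Γ)) :
    ∃ δ : ℝ, 0 < δ ∧
      ∀ x ∈ E, ∀ r : ℝ, 0 < r → ENNReal.ofReal r < EMetric.diam E →
        ∀ V₀ Γ, IsLipGraph d n L V₀ Γ →
          ENNReal.ofReal (θ * r ^ n) ≤ μH[(n:ℝ)] (ball x r ∩ E ∩ Γ) →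
          ∀ W : Submodule ℝ (EuclideanSpace ℝ (Fin d)), Module.finrank ℝ W = n →
            ‖projL W - projL V₀‖ < δ →
            ENNReal.ofReal (δ * r ^ n) ≤ μH[(n:ℝ)] (projL W '' (ball x r ∩ E)) := by
  classical
  set Kr : ℝ := 2 * (1 + (L : ℝ)) with hKrdef
  have hL0 : (0 : ℝ) ≤ L := L.coe_nonneg
  have hKr1 : (1 : ℝ) ≤ Kr := by simp only [hKrdef]; nlinarith
  have hKr0 : (0 : ℝ) < Kr := lt_of_lt_of_le one_pos hKr1
  have hKrn0 : (0 : ℝ) < Kr ^ n := pow_pos hKr0 n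
  refine ⟨min Kr⁻¹ (θ / Kr ^ n), lt_min (by positivity) (by positivity), ?_⟩
  intro x hx r hr hrdiam V₀ Γ hΓ hΓmeas W hWrank hW
  obtain ⟨hV₀rank, f, hfmem, hfLip, hΓeq⟩ := hΓ
  set A : Set (EuclideanSpace ℝ (Fin d)) := ball x r ∩ E ∩ Γ with hAdef
  set πW : EuclideanSpace ℝ (Fin d) → EuclideanSpace ℝ (Fin d) := fun z => projL W z with hπWdef
  -- projection onto V₀ recovers the base point of graph points
  have hπV₀ : ∀ v : V₀, projL V₀ ((v : EuclideanSpace ℝ (Fin d)) + f v)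
      = (v : EuclideanSpace ℝ (Fin d)) := by
    intro v
    simp only [projL, ContinuousLinearMap.coe_comp', Function.comp_apply,
      Submodule.coe_subtypeL', Submodule.coe_subtype, map_add, Submodule.orthogonalProjection]
    rw [Submodule.orthogonalProjectionOnto_mem_subspace_eq_self v,
      Submodule.orthogonalProjectionOnto_apply_of_mem_orthogonal (hfmem v)]
    simp
  -- key bi-Lipschitz estimate on Γ
  have hkey : ∀ a ∈ Γ, ∀ b ∈ Γ, ‖a - b‖ ≤ Kr * ‖πW a - πW b‖ := by
    intro a ha b hb
    rw [hΓeq] at ha hb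
    obtain ⟨v, rfl⟩ := ha
    obtain ⟨w, rfl⟩ := hb
    set a : EuclideanSpace ℝ (Fin d) := (v : EuclideanSpace ℝ (Fin d)) + f v with hadef
    set b : EuclideanSpace ℝ (Fin d) := (w : EuclideanSpace ℝ (Fin d)) + f w with hbdef
    have h1 : ‖a - b‖ ≤ (1 + (L : ℝ)) * ‖(v : EuclideanSpace ℝ (Fin d)) - w‖ := by
      have hf : ‖f v - f w‖ ≤ (L : ℝ) * ‖(v : EuclideanSpace ℝ (Fin d)) - w‖ := by
        have := hfLip.dist_le_mul v w
        rwa [dist_eq_norm, Subtype.dist_eq, dist_eq_norm] at this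
      calc ‖a - b‖ = ‖((v : EuclideanSpace ℝ (Fin d)) - w) + (f v - f w)‖ := by
            rw [hadef, hbdef]; congr 1; abel
        _ ≤ ‖(v : EuclideanSpace ℝ (Fin d)) - w‖ + ‖f v - f w‖ := norm_add_le _ _
        _ ≤ (1 + (L : ℝ)) * ‖(v : EuclideanSpace ℝ (Fin d)) - w‖ := by nlinarith [norm_nonneg ((v : EuclideanSpace ℝ (Fin d)) - w)]
    have h2 : ‖(v : EuclideanSpace ℝ (Fin d)) - w‖ = ‖projL V₀ a - projL V₀ b‖ := by
      rw [hadef, hbdef, hπV₀ v, hπV₀ w]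
    have h3 : ‖projL V₀ a - projL V₀ b‖ ≤ ‖πW a - πW b‖ + Kr⁻¹ * ‖a - b‖ := by
      have hop : ‖(projL W - projL V₀) (a - b)‖ ≤ ‖projL W - projL V₀‖ * ‖a - b‖ :=
        (projL W - projL V₀).le_opNorm _
      have hδ : ‖projL W - projL V₀‖ ≤ Kr⁻¹ := le_trans hW.le (min_le_left _ _)
      have heq : projL V₀ a - projL V₀ b = (πW a - πW b) - (projL W - projL V₀) (a - b) := by
        simp [hπWdef, map_sub]; abel
      calc ‖projL V₀ a - projL V₀ b‖
          ≤ ‖πW a - πW b‖ + ‖(projL W - projL V₀) (a - b)‖ := by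
            rw [heq]; exact norm_sub_le _ _
        _ ≤ ‖πW a - πW b‖ + Kr⁻¹ * ‖a - b‖ := by
            have : ‖projL W - projL V₀‖ * ‖a - b‖ ≤ Kr⁻¹ * ‖a - b‖ :=
              mul_le_mul_of_nonneg_right hδ (norm_nonneg _)
            linarith [le_trans hop this]
    have hL1 : (1 + (L : ℝ)) * Kr⁻¹ = 1 / 2 := by
      rw [hKrdef]; field_simp
    have hab : ‖a - b‖ ≤ (1 + (L : ℝ)) * ‖πW a - πW b‖ + (1 / 2) * ‖a - b‖ := by
      calc ‖a - b‖ ≤ (1 + (L : ℝ)) * (‖πW a - πW b‖ + Kr⁻¹ * ‖a - b‖) := by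
            rw [h2] at h1; nlinarith
        _ = (1 + (L : ℝ)) * ‖πW a - πW b‖ + ((1 + (L : ℝ)) * Kr⁻¹) * ‖a - b‖ := by ring
        _ = (1 + (L : ℝ)) * ‖πW a - πW b‖ + (1 / 2) * ‖a - b‖ := by rw [hL1]
    have : (1 / 2) * ‖a - b‖ ≤ (1 + (L : ℝ)) * ‖πW a - πW b‖ := by linarith
    rw [hKrdef]; linarith
  have hAΓ : A ⊆ Γ := fun z hz => hz.2
  -- injectivity of πW on A
  have hinj : Set.InjOn πW A := by
    intro a ha b hb hab
    have := hkey a (hAΓ ha) b (hAΓ hb)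
    rw [hab] at this
    simp only [sub_self, norm_zero, mul_zero] at this
    have : ‖a - b‖ = 0 := le_antisymm this (norm_nonneg _)
    rwa [norm_sub_eq_zero_iff] at this
  -- the inverse is Lipschitz on πW '' A
  set K : ℝ≥0 := ⟨Kr, hKr0.le⟩ with hKdef
  set g : EuclideanSpace ℝ (Fin d) → EuclideanSpace ℝ (Fin d) := Function.invFunOn πW A with hgdef
  have hgLip : LipschitzOnWith K g (πW '' A) := by
    rw [lipschitzOnWith_iff_dist_le_mul]
    rintro y₁ ⟨a, ha, rfl⟩ y₂ ⟨b, hb, rfl⟩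
    have hga : g (πW a) = a := hinj.leftInvOn_invFunOn ha
    have hgb : g (πW b) = b := hinj.leftInvOn_invFunOn hb
    rw [hga, hgb, dist_eq_norm, dist_eq_norm]
    exact hkey a (hAΓ ha) b (hAΓ hb)
  have himg : g '' (πW '' A) = A := hinj.invFunOn_image (subset_refl A)
  have hn0 : (0 : ℝ) ≤ (n : ℝ) := Nat.cast_nonneg n
  have hmeas : μH[(n : ℝ)] A ≤ (K : ℝ≥0∞) ^ (n : ℝ) * μH[(n : ℝ)] (πW '' A) := by
    calc μH[(n : ℝ)] A = μH[(n : ℝ)] (g '' (πW '' A)) := by rw [himg]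
      _ ≤ (K : ℝ≥0∞) ^ (n : ℝ) * μH[(n : ℝ)] (πW '' A) :=
          hgLip.hausdorffMeasure_image_le hn0
  -- conclude
  have hmono : μH[(n : ℝ)] (πW '' A) ≤ μH[(n : ℝ)] (projL W '' (ball x r ∩ E)) :=
    measure_mono (Set.image_mono Set.inter_subset_left)
  refine le_trans ?_ hmono
  have hKpow : (K : ℝ≥0∞) ^ (n : ℝ) = ENNReal.ofReal (Kr ^ n) := by
    rw [ENNReal.rpow_natCast, ENNReal.ofReal_pow hKr0.le]
    congr 1
    simp [hKdef, ENNReal.ofReal, Real.toNNReal, hKr0.le]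
    rfl
  have hKne : (K : ℝ≥0∞) ^ (n : ℝ) ≠ 0 := by
    rw [hKpow]; exact (ENNReal.ofReal_pos.mpr hKrn0).ne'
  have hKnetop : (K : ℝ≥0∞) ^ (n : ℝ) ≠ ⊤ := by rw [hKpow]; exact ENNReal.ofReal_ne_top
  rw [← ENNReal.mul_le_mul_iff_right hKne hKnetop]
  calc (K : ℝ≥0∞) ^ (n : ℝ) * ENNReal.ofReal (min Kr⁻¹ (θ / Kr ^ n) * r ^ n)
      = ENNReal.ofReal (Kr ^ n * (min Kr⁻¹ (θ / Kr ^ n) * r ^ n)) := by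
        rw [hKpow, ← ENNReal.ofReal_mul (by positivity)]
    _ ≤ ENNReal.ofReal (θ * r ^ n) := by
        apply ENNReal.ofReal_le_ofReal
        have h1 : min Kr⁻¹ (θ / Kr ^ n) ≤ θ / Kr ^ n := min_le_right _ _
        have h2 : Kr ^ n * min Kr⁻¹ (θ / Kr ^ n) ≤ θ := by
          calc Kr ^ n * min Kr⁻¹ (θ / Kr ^ n) ≤ Kr ^ n * (θ / Kr ^ n) :=
                mul_le_mul_of_nonneg_left h1 hKrn0.le
            _ = θ := by field_simp
        nlinarith [pow_pos hr n]
    _ ≤ μH[(n : ℝ)] A := hΓmeas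
    _ ≤ (K : ℝ≥0∞) ^ (n : ℝ) * μH[(n : ℝ)] (πW '' A) := hmeas
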